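/- Let n ≥ 3. Every finite index subgroup of SL(n,ℤ) contains an element whose characteristic polynomial has nonzero discriminant (i.e., an element with n distinct complex eigenvalues). -/

import Mathlib

open Matrix Polynomial
open scoped ComplexOrder

namespace Stmt3Aux


variable (m : ℕ)

/-- unit lower bidiagonal matrix -/
def L : Matrix (Fin (m+1)) (Fin (m+1)) ℤ := fun i j =>
  if (i:ℕ) = j ∨ (i:ℕ) = (j:ℕ)+1 then 1 else 0

def gZ : Matrix (Fin (m+1)) (Fin (m+1)) ℤ := L m * (L m)ᵀ

lemma L_tri : (L m).BlockTriangular OrderDual.toDual := by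
  intro i j h
  simp only [OrderDual.toDual_lt_toDual] at h
  unfold L
  rw [if_neg]
  push_neg
  constructor <;> omega

lemma det_L : (L m).det = 1 := by
  rw [det_of_lowerTriangular _ (L_tri m)]
  apply Finset.prod_eq_one
  intro i _
  simp [L]

lemma det_gZ : (gZ m).det = 1 := by
  rw [gZ, det_mul, det_transpose, det_L, mul_one]

lemma gZ_apply (a b : Fin (m+1)) : gZ m a b = ∑ k, L m a k * L m b k := by
  simp [gZ, mul_apply, transpose_apply]

lemma gZ_sub (a b : Fin (m+1)) (h : (b:ℕ)+1 = a) : gZ m a b = 1 := by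
  rw [gZ_apply]
  rw [Finset.sum_eq_single b]
  · unfold L
    rw [if_pos (Or.inr (by omega)), if_pos (Or.inl rfl), mul_one]
  · intro k _ hk
    have hk' : (k:ℕ) ≠ (b:ℕ) := fun e => hk (Fin.ext e)
    unfold L
    split_ifs with h1 h2 <;> first | omega | ring
  · intro h; exact absurd (Finset.mem_univ b) h

lemma gZ_low (a b : Fin (m+1)) (h : (b:ℕ)+2 ≤ a) : gZ m a b = 0 := by
  rw [gZ_apply]
  apply Finset.sum_eq_zero
  intro k _
  unfold L
  split_ifs with h1 h2 <;> first | omega | ring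


variable (m : ℕ) (Lz gz : Matrix (Fin (m+1)) (Fin (m+1)) ℤ)


lemma conjT : (Lz.map (Int.cast : ℤ → ℂ))ᴴ = Lzᵀ.map (Int.cast : ℤ → ℂ) := by
  ext i j
  simp [conjTranspose_apply]

lemma factored (h : gz = Lz * Lzᵀ) :
    gz.map (Int.cast : ℤ → ℂ) = (Lz.map (Int.cast : ℤ → ℂ)) * (Lz.map (Int.cast : ℤ → ℂ))ᴴ := by
  rw [h, conjT]
  exact Matrix.map_mul (f := Int.castRingHom ℂ)

lemma herm (h : gz = Lz * Lzᵀ) : (gz.map (Int.cast : ℤ → ℂ)).IsHermitian := by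
  rw [factored m Lz gz h]
  exact isHermitian_mul_conjTranspose_self _

lemma psd (h : gz = Lz * Lzᵀ) : (gz.map (Int.cast : ℤ → ℂ)).PosSemidef := by
  rw [factored m Lz gz h]
  exact posSemidef_self_mul_conjTranspose _

lemma evpos (h : gz = Lz * Lzᵀ) (hdet : gz.det = 1) (i : Fin (m+1)) :
    0 < (herm m Lz gz h).eigenvalues i := by
  have h0 := (psd m Lz gz h).eigenvalues_nonneg i
  rcases lt_or_eq_of_le h0 with h1 | h1
  · exact h1
  · exfalso
    have hd := (herm m Lz gz h).det_eq_prod_eigenvalues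
    have hmap : (gz.map (Int.cast : ℤ → ℂ)).det = ((gz.det : ℤ) : ℂ) :=
      ((RingHom.map_det (Int.castRingHom ℂ) gz).symm)
    rw [hmap, hdet] at hd
    have : ((1:ℝ) : ℂ) = ((∏ j, (herm m Lz gz h).eigenvalues j : ℝ) : ℂ) := by
      push_cast
      simpa using hd
    have h2 : (1:ℝ) = ∏ j, (herm m Lz gz h).eigenvalues j := by exact_mod_cast this
    rw [Finset.prod_eq_zero (Finset.mem_univ i) h1.symm] at h2
    norm_num at h2

variable {m} {gz}


lemma ker_eval (hsub : ∀ a b : Fin (m+1), (b:ℕ)+1 = a → gz a b = 1)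
    (hlow : ∀ a b : Fin (m+1), (b:ℕ)+2 ≤ a → gz a b = 0)
    (lam : ℂ) (v : Fin (m+1) → ℂ)
    (hv : (gz.map (Int.cast : ℤ → ℂ) - lam • 1).mulVec v = 0)
    (hlast : v (Fin.last m) = 0) : v = 0 := by
  have key : ∀ k : ℕ, ∀ i : Fin (m+1), m ≤ (i:ℕ) + k → v i = 0 := by
    intro k
    induction k with
    | zero =>
      intro i hi
      have hi' : i = Fin.last m := Fin.ext (by simpa using Nat.le_antisymm (by omega) (by omega))
      rw [hi']; exact hlast
    | succ k ih =>
      intro i hi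
      by_cases hc : m ≤ (i:ℕ) + k
      · exact ih i hc
      · have hilt : (i:ℕ) < m := by omega
        set a : Fin (m+1) := ⟨(i:ℕ)+1, by omega⟩ with ha
        have hrow : ∑ b, (gz.map (Int.cast : ℤ → ℂ) - lam • 1) a b * v b = 0 := by
          have := congrFun hv a
          simpa [mulVec, dotProduct] using this
        rw [Finset.sum_eq_single i] at hrow
        · have hane : a ≠ i := by
            intro h; apply absurd (congrArg Fin.val h); simp [ha]
          have hentry : (gz.map (Int.cast : ℤ → ℂ) - lam • 1) a i = 1 := by
            rw [Matrix.sub_apply, map_apply, hsub a i (by simp [ha]), Matrix.smul_apply, one_apply_ne hane]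
            simp
          rw [hentry, one_mul] at hrow
          exact hrow
        · intro b _ hb
          rcases lt_or_gt_of_ne (fun e => hb (Fin.ext e) : (b:ℕ) ≠ i) with hlt | hgt
          · have hane : a ≠ b := by
              intro h; apply absurd (congrArg Fin.val h); simp [ha]; omega
            have hentry : (gz.map (Int.cast : ℤ → ℂ) - lam • 1) a b = 0 := by
              rw [Matrix.sub_apply, map_apply, hlow a b (by simp [ha]; omega), Matrix.smul_apply,
                one_apply_ne hane]
              simp
            rw [hentry, zero_mul]
          · rw [ih b (by omega), mul_zero]
        · intro hni; exact absurd (Finset.mem_univ i) hni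
  funext i
  exact key m i (by omega)


lemma mu_inj (hM : (gz.map (Int.cast : ℤ → ℂ)).IsHermitian)
    (hker : ∀ (lam : ℂ) (v : Fin (m+1) → ℂ),
      (gz.map (Int.cast : ℤ → ℂ) - lam • 1).mulVec v = 0 → v (Fin.last m) = 0 → v = 0) :
    Function.Injective hM.eigenvalues := by
  intro i j hij
  by_contra hne
  set Mc := gz.map (Int.cast : ℤ → ℂ) with hMc
  set lam : ℂ := (hM.eigenvalues i : ℂ) with hlam
  set B := Mc - lam • 1 with hB
  set K := LinearMap.ker B.mulVecLin with hK
  have hwmem : ∀ t : Fin (m+1), hM.eigenvalues t = hM.eigenvalues i →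
      (⇑(hM.eigenvectorBasis t) : Fin (m+1) → ℂ) ∈ K := by
    intro t ht
    rw [LinearMap.mem_ker, mulVecLin_apply, hB, sub_mulVec, smul_mulVec, one_mulVec,
      hM.mulVec_eigenvectorBasis t, ht]
    ext x
    simp [hlam, Complex.real_smul]
  have hφinj : ∀ x : K, (x : Fin (m+1) → ℂ) (Fin.last m) = 0 → x = 0 := by
    intro x hx
    have hxm := x.2
    rw [LinearMap.mem_ker, mulVecLin_apply] at hxm
    exact Subtype.ext (hker lam x.1 hxm hx)
  have h1 : Module.finrank ℂ K ≤ 1 := by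
    let φ : K →ₗ[ℂ] ℂ := (LinearMap.proj (Fin.last m)).comp K.subtype
    have hinj : Function.Injective φ := by
      intro a b hab
      have : a - b = 0 := hφinj (a - b) (by
        have : φ (a - b) = 0 := by rw [map_sub, hab, sub_self]
        simpa [φ] using this)
      exact sub_eq_zero.mp this
    simpa using LinearMap.finrank_le_finrank_of_injective hinj
  have hfininj : Function.Injective (![i, j]) := by
    intro a b hab
    fin_cases a <;> fin_cases b <;>
      simp only [Matrix.cons_val_zero, Matrix.cons_val_one, Matrix.head_cons,
        Matrix.cons_val_fin_one] at hab
    · rfl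
    · exact absurd hab hne
    · exact absurd hab.symm hne
    · rfl
  have li0 : LinearIndependent ℂ (fun t : Fin 2 => (⇑(hM.eigenvectorBasis (![i,j] t)) : Fin (m+1) → ℂ)) := by
    have := (hM.eigenvectorBasis.orthonormal.linearIndependent).comp (![i,j]) hfininj
    exact this.map' (WithLp.linearEquiv 2 ℂ (Fin (m+1) → ℂ)).toLinearMap (LinearEquiv.ker _)
  have hspan : Submodule.span ℂ
      (Set.range (fun t : Fin 2 => (⇑(hM.eigenvectorBasis (![i,j] t)) : Fin (m+1) → ℂ))) ≤ K := by
    rw [Submodule.span_le]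
    rintro x ⟨t, rfl⟩
    fin_cases t
    · exact hwmem i rfl
    · exact hwmem j hij.symm
  have h2 : 2 ≤ Module.finrank ℂ K := by
    have := Submodule.finrank_mono hspan
    rw [finrank_span_eq_card li0] at this
    simpa using this
  omega
variable {N : Type*} [Fintype N] [DecidableEq N]

lemma charmatrix_eq (M : Matrix N N ℂ) :
    charmatrix M = Matrix.diagonal (fun _ => (X : ℂ[X])) - M.map C := by
  ext i j
  rw [charmatrix_apply]
  simp [Matrix.sub_apply, Matrix.map_apply]

lemma diag_comm (M : Matrix N N ℂ[X]) :
    M * Matrix.diagonal (fun _ => (X : ℂ[X])) = Matrix.diagonal (fun _ => (X : ℂ[X])) * M := by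
  ext i j
  simp [Matrix.mul_diagonal, Matrix.diagonal_mul, mul_comm]

lemma charpoly_conj (P Q D : Matrix N N ℂ) (h1 : P * Q = 1) (h2 : Q * P = 1) :
    (P * D * Q).charpoly = D.charpoly := by
  have hmapC : ∀ (A B : Matrix N N ℂ), (A * B).map (C : ℂ → ℂ[X]) = A.map C * B.map C :=
    fun A B => Matrix.map_mul (f := C)
  have key : charmatrix (P * D * Q) = (P.map C) * charmatrix D * (Q.map C) := by
    rw [charmatrix_eq, charmatrix_eq, mul_sub, sub_mul, ← hmapC, ← hmapC]
    congr 1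
    rw [diag_comm (P.map C), mul_assoc, ← hmapC, h1, Matrix.map_one _ (map_zero C) (map_one C),
      mul_one]
  rw [Matrix.charpoly, Matrix.charpoly, key, det_mul, det_mul, mul_comm, ← mul_assoc, ← det_mul,
    ← hmapC, h2, Matrix.map_one _ (map_zero C) (map_one C), det_one, one_mul]

lemma charpoly_diag (d : N → ℂ) :
    (Matrix.diagonal d).charpoly = ∏ i, (X - C (d i)) := by
  rw [Matrix.charpoly, charmatrix_eq]
  have : Matrix.diagonal (fun _ => (X : ℂ[X])) - (Matrix.diagonal d).map C
      = Matrix.diagonal (fun i => X - C (d i)) := by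
    ext i j
    by_cases h : i = j <;> simp [h, Matrix.diagonal_apply_ne, Matrix.map_apply]
  rw [this, det_diagonal]

lemma conj_pow' (P Q D : Matrix N N ℂ) (h1 : P * Q = 1) (h2 : Q * P = 1) (k : ℕ) :
    (P * D * Q) ^ k = P * D ^ k * Q := by
  induction k with
  | zero => simp [h1]
  | succ k ih =>
    rw [pow_succ, ih, pow_succ]
    calc P * D ^ k * Q * (P * D * Q) = P * D ^ k * (Q * P) * D * Q := by
          simp only [mul_assoc]
    _ = P * (D ^ k * D) * Q := by rw [h2]; simp only [mul_one, mul_assoc]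



lemma count (hM : (gz.map (Int.cast : ℤ → ℂ)).IsHermitian)
    (hpos : ∀ i, 0 < hM.eigenvalues i) (hinj : Function.Injective hM.eigenvalues)
    (k : ℕ) (hk : 1 ≤ k) :
    (((gz.map (Int.cast : ℤ → ℂ)) ^ k).charpoly).roots.toFinset.card = m + 1 := by
  classical
  set P : Matrix (Fin (m+1)) (Fin (m+1)) ℂ := (Matrix.IsHermitian.eigenvectorUnitary hM : Matrix (Fin (m+1)) (Fin (m+1)) ℂ) with hP
  have h1 : P * star P = 1 := mem_unitaryGroup_iff.mp (Matrix.IsHermitian.eigenvectorUnitary hM).2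
  have h2 : star P * P = 1 := mem_unitaryGroup_iff'.mp (Matrix.IsHermitian.eigenvectorUnitary hM).2
  set f : Fin (m+1) → ℂ := fun i => ((hM.eigenvalues i : ℂ)) ^ k with hf
  have hcp : ((gz.map (Int.cast : ℤ → ℂ)) ^ k).charpoly = ∏ i, (X - C (f i)) := by
    conv_lhs => rw [hM.spectral_theorem, Unitary.conjStarAlgAut_apply]
    rw [conj_pow' P (star P) _ h1 h2, charpoly_conj P (star P) _ h1 h2, Matrix.diagonal_pow,
      charpoly_diag]
    rfl
  have finj : Function.Injective f := by
    intro i j hij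
    rw [hf] at hij
    simp only at hij
    have : ((hM.eigenvalues i ^ k : ℝ) : ℂ) = ((hM.eigenvalues j ^ k : ℝ) : ℂ) := by
      push_cast; exact hij
    have h3 : hM.eigenvalues i ^ k = hM.eigenvalues j ^ k := by exact_mod_cast this
    exact hinj ((pow_left_strictMonoOn₀ (Nat.one_le_iff_ne_zero.mp hk)).injOn
      (hpos i).le (hpos j).le h3)
  have hroots : (∏ i, (X - C (f i))).roots = Finset.univ.val.map f := by
    have : (∏ i, (X - C (f i))) = ((Finset.univ.val.map f).map (fun a => X - C a)).prod := by
      rw [Multiset.map_map]; rfl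
    rw [this, roots_multiset_prod_X_sub_C]
  rw [hcp, hroots, Multiset.toFinset_map, Finset.val_toFinset, Finset.card_image_of_injective _ finj]
  simp

lemma count' (m k : ℕ) (hk : 1 ≤ k) :
    ((((gZ m).map (Int.cast : ℤ → ℂ)) ^ k).charpoly).roots.toFinset.card = m + 1 := by
  refine count (herm m (L m) (gZ m) rfl) (evpos m (L m) (gZ m) rfl (det_gZ m)) ?_ k hk
  exact mu_inj _ (ker_eval (gZ_sub m) (gZ_low m))

end Stmt3Aux

/-- **Theorem.** Let `n ≥ 3`. Every finite index subgroup of `SL(n,ℤ)` contains an element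
whose characteristic polynomial has nonzero discriminant, i.e. an element with `n` distinct
complex eigenvalues (the characteristic polynomial over `ℂ` has `n` distinct roots). -/
theorem stmt3 (n : ℕ) (hn : 3 ≤ n)
    (Γ : Subgroup (Matrix.SpecialLinearGroup (Fin n) ℤ)) (hΓ : Γ.FiniteIndex) :
    ∃ g ∈ Γ, (((g : Matrix (Fin n) (Fin n) ℤ).map
        ((↑) : ℤ → ℂ)).charpoly).roots.toFinset.card = n := by
  obtain ⟨m, rfl⟩ : ∃ m, n = m + 1 := ⟨n - 1, by omega⟩
  set G : Matrix.SpecialLinearGroup (Fin (m+1)) ℤ := ⟨Stmt3Aux.gZ m, Stmt3Aux.det_gZ m⟩ with hG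
  haveI := hΓ
  have hfin : Finite (Matrix.SpecialLinearGroup (Fin (m+1)) ℤ ⧸ Γ) := inferInstance
  obtain ⟨i, j, hne, heq⟩ := Finite.exists_ne_map_eq_of_infinite
    (fun t : ℕ => (QuotientGroup.mk (G ^ t) : Matrix.SpecialLinearGroup (Fin (m+1)) ℤ ⧸ Γ))
  wlog hij : i < j generalizing i j
  · exact this j i hne.symm heq.symm (by omega)
  have hmem : G ^ (j - i) ∈ Γ := by
    have h := QuotientGroup.eq.mp heq
    have hp : (G ^ i)⁻¹ * G ^ j = G ^ (j - i) := by
      rw [show j = i + (j - i) by omega, pow_add, inv_mul_cancel_left]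
      congr 1
      omega
    rwa [hp] at h
  refine ⟨G ^ (j - i), hmem, ?_⟩
  have hcoe : ((G ^ (j - i) : Matrix.SpecialLinearGroup (Fin (m+1)) ℤ) : Matrix (Fin (m+1)) (Fin (m+1)) ℤ)
      = Stmt3Aux.gZ m ^ (j - i) := by
    rw [Matrix.SpecialLinearGroup.coe_pow]
  rw [hcoe]
  have hmapspow : ((Stmt3Aux.gZ m ^ (j - i)).map (Int.cast : ℤ → ℂ))
      = ((Stmt3Aux.gZ m).map (Int.cast : ℤ → ℂ)) ^ (j - i) := by
    have := map_pow ((Int.castRingHom ℂ).mapMatrix) (Stmt3Aux.gZ m) (j - i)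
    simpa [RingHom.mapMatrix_apply] using this
  rw [hmapspow]
  exact Stmt3Aux.count' m (j - i) (by omega)
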